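/- If a policy pi is diffusion regular, then there exists a constant C such that E[||Z-tilde_t^N||_2^2] <= C and E[||X-tilde_t^N||_2^2] <= C for all t in [T] and all N. -/

import Mathlib

open MeasureTheory ProbabilityTheory Filter Finset

/-- A single-arm finite-horizon restless bandit model: finite state space `S`,
actions `Bool` (pull = `true`), horizon `T`, time-dependent transition kernel `p`,
rewards `r`, common initial state `s0`, and budget ratios `α`. -/
structure Arm (S : Type) [Fintype S] where
  T : ℕ
  p : ℕ → S → Bool → S → ℝ
  p_nonneg : ∀ t s a s', 0 ≤ p t s a s'
  p_sum : ∀ t s a, ∑ s', p t s a s' = 1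
  r : ℕ → S → Bool → ℝ
  s0 : S
  α : ℕ → ℝ

variable {S : Type} [Fintype S] [DecidableEq S]

/-- Feasibility for the single-arm occupation-measure linear program:
nonnegativity, budget constraints, initial condition, and flow balance. -/
def LPFeasible (M : Arm S) (x : ℕ → S → Bool → ℝ) : Prop :=
  (∀ t s a, 0 ≤ x t s a) ∧
  (∀ t, t < M.T → ∑ s, x t s true = M.α t) ∧
  (∀ s a, s ≠ M.s0 → x 0 s a = 0) ∧
  (∑ s, ∑ a, x 0 s a = 1) ∧
  (∀ t, t + 1 < M.T → ∀ s', ∑ a, x (t + 1) s' a = ∑ s, ∑ a, x t s a * M.p t s a s')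

/-- Objective of the occupation-measure LP. -/
def LPobj (M : Arm S) (x : ℕ → S → Bool → ℝ) : ℝ :=
  ∑ t ∈ Finset.range M.T, ∑ s, ∑ a, M.r t s a * x t s a

/-- An optimal occupation measure for the LP relaxation. -/
def LPOptimal (M : Arm S) (x : ℕ → S → Bool → ℝ) : Prop :=
  LPFeasible M x ∧ ∀ y, LPFeasible M y → LPobj M y ≤ LPobj M x

/-- Marginal state occupation `z_t(s) = ∑_a x_t(s,a)`. -/
def zOf (x : ℕ → S → Bool → ℝ) : ℕ → S → ℝ := fun t s => ∑ a, x t s a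

/-- A (Markov, randomized) policy for the joint `N`-arm MDP: at each time `t` and
joint state, a probability distribution over joint actions. -/
def JPolicy (S : Type) (N : ℕ) := ℕ → (Fin N → S) → (Fin N → Bool) → ℝ

/-- Validity of a randomized joint policy: nonnegative action probabilities summing to one. -/
def ValidJ {N : ℕ} (π : JPolicy S N) : Prop :=
  ∀ t σ, (∀ a, 0 ≤ π t σ a) ∧ ∑ a, π t σ a = 1

/-- Distribution of the joint state at time `t` under policy `π`, all arms starting at `s0`
and transitioning independently according to the kernel `p`. -/
def jdist (M : Arm S) (N : ℕ) (π : JPolicy S N) : ℕ → (Fin N → S) → ℝ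
  | 0 => fun σ => if σ = fun _ => M.s0 then 1 else 0
  | t + 1 => fun σ' =>
      ∑ σ : Fin N → S, ∑ a : Fin N → Bool,
        jdist M N π t σ * π t σ a * ∏ i, M.p t (σ i) (a i) (σ' i)

/-- Number of arms pulled by a joint action. -/
def pulls {N : ℕ} (a : Fin N → Bool) : ℕ := ∑ i, if a i then 1 else 0

/-- Expected total reward of the joint `N`-arm MDP under policy `π`. -/
def jvalue (M : Arm S) (N : ℕ) (π : JPolicy S N) : ℝ :=
  ∑ t ∈ Finset.range M.T, ∑ σ : Fin N → S, ∑ a : Fin N → Bool,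
    jdist M N π t σ * π t σ a * ∑ i, M.r t (σ i) (a i)

/-- Hard budget feasibility: the policy almost surely pulls exactly `⌊α_t N⌋` arms. -/
def HardFeasible (M : Arm S) (N : ℕ) (π : JPolicy S N) : Prop :=
  ValidJ π ∧ ∀ t, t < M.T → ∀ σ a, π t σ a ≠ 0 → pulls a = ⌊M.α t * N⌋₊

/-- Relaxed budget feasibility: the expected number of pulls at time `t` equals `α_t N`. -/
def RelaxFeasible (M : Arm S) (N : ℕ) (π : JPolicy S N) : Prop :=
  ValidJ π ∧ ∀ t, t < M.T →
    ∑ σ : Fin N → S, ∑ a : Fin N → Bool,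
      jdist M N π t σ * π t σ a * (pulls a : ℝ) = M.α t * N

/-- Optimal value `V_N^*` of the hard-budget-constrained `N`-arm problem. -/
noncomputable def Vstar (M : Arm S) (N : ℕ) : ℝ :=
  sSup {v | ∃ π : JPolicy S N, HardFeasible M N π ∧ v = jvalue M N π}

/-- Optimal value `V̂_N^*` of the expectation-relaxed `N`-arm problem. -/
noncomputable def Vhat (M : Arm S) (N : ℕ) : ℝ :=
  sSup {v | ∃ π : JPolicy S N, RelaxFeasible M N π ∧ v = jvalue M N π}

/-- A count-based policy for the `N`-arm problem: maps time `t` and the vector of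
state counts `Z` to the state-action counts `X` (so `X = π(t, Z)`). -/
def CPolicy (S : Type) := ℕ → (S → ℕ) → S → Bool → ℕ

/-- Validity of a count policy: every arm receives exactly one action. -/
def ValidC {S : Type} [Fintype S] (π : CPolicy S) : Prop :=
  ∀ t Z s, π t Z s true + π t Z s false = Z s

/-- A count policy respects the hard budget: exactly `⌊α_t N⌋` arms are pulled. -/
def BudgetC {S : Type} [Fintype S] (M : Arm S) (π : CPolicy S) : Prop :=
  ∀ t Z, t < M.T → ∑ s, π t Z s true = ⌊M.α t * (∑ s, Z s : ℕ)⌋₊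

/-- Fluid consistency of a count policy with respect to an occupation measure `x`:
whenever the empirical state frequencies converge to `z_t = ∑_a x_t(·,a)`, the
frequencies of the chosen state-action counts converge to `x_t`. -/
def FluidConsistent {S : Type} [Fintype S] [DecidableEq S] (M : Arm S) (π : CPolicy S)
    (x : ℕ → S → Bool → ℝ) : Prop :=
  ∀ t, t < M.T → ∀ Zs : ℕ → S → ℕ,
    (∀ N, ∑ s, Zs N s = N) →
    (∀ s, Filter.Tendsto (fun N => (Zs N s : ℝ) / N) Filter.atTop (nhds (zOf x t s))) →
    ∀ s a, Filter.Tendsto (fun N => (π t (Zs N) s a : ℝ) / N) Filter.atTop (nhds (x t s a))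

/-- Number of arms in state `s` under the joint configuration `σ`. -/
def countOf {S : Type} [Fintype S] [DecidableEq S] {N : ℕ} (σ : Fin N → S) (s : S) : ℕ :=
  (Finset.univ.filter fun i => σ i = s).card

/-- The coupled `N`-arm state process driven by a count policy `π`, i.i.d. uniform
innovations `U i t` and an inverse-transform update map `F` realizing the kernel `p`:
all arms start at `s0`; at each time, among the arms currently in state `s`, the
`π(t,Z)(s,true)` lowest-indexed ones are pulled, and each arm transitions via `F`. -/
noncomputable def armState {S : Type} [Fintype S] [DecidableEq S] {Ω : Type}
    (M : Arm S) (π : CPolicy S) (F : ℕ → S → Bool → ℝ → S) (U : ℕ → ℕ → Ω → ℝ)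
    (N : ℕ) : ℕ → Ω → Fin N → S
  | 0 => fun _ _ => M.s0
  | t + 1 => fun ω i =>
      let st := armState M π F U N t ω
      let Z : S → ℕ := countOf st
      let a : Bool :=
        decide ((Finset.univ.filter fun j => st j = st i ∧ j < i).card < π t Z (st i) true)
      F t (st i) a (U i t ω)

/-- State counts `Z_t^N(s)` of the coupled process. -/
noncomputable def Zc {S : Type} [Fintype S] [DecidableEq S] {Ω : Type}
    (M : Arm S) (π : CPolicy S) (F : ℕ → S → Bool → ℝ → S) (U : ℕ → ℕ → Ω → ℝ)
    (N t : ℕ) (ω : Ω) : S → ℕ :=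
  countOf (armState M π F U N t ω)

/-- State-action counts `X_t^N(s,a) = π(t, Z_t^N)(s,a)` of the coupled process. -/
noncomputable def Xc {S : Type} [Fintype S] [DecidableEq S] {Ω : Type}
    (M : Arm S) (π : CPolicy S) (F : ℕ → S → Bool → ℝ → S) (U : ℕ → ℕ → Ω → ℝ)
    (N t : ℕ) (ω : Ω) : S → Bool → ℕ :=
  π t (Zc M π F U N t ω)

/-- The standing assumptions on the driving noise: the `U i t` are i.i.d. uniform on
`[0,1]` and `F` realizes the transition kernel `p` by inverse transform. -/
def Innovations {S : Type} [Fintype S] [DecidableEq S] [MeasurableSpace S]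
    [DiscreteMeasurableSpace S] {Ω : Type} [MeasurableSpace Ω]
    (M : Arm S) (μ : MeasureTheory.Measure Ω) (F : ℕ → S → Bool → ℝ → S)
    (U : ℕ → ℕ → Ω → ℝ) : Prop :=
  (∀ i t, Measurable (U i t)) ∧
  ProbabilityTheory.iIndepFun
    (fun q : ℕ × ℕ => U q.1 q.2) μ ∧
  (∀ i t, MeasureTheory.Measure.map (U i t) μ
      = MeasureTheory.volume.restrict (Set.Icc (0 : ℝ) 1)) ∧
  (∀ t s a, Measurable (F t s a)) ∧
  (∀ t s a s', MeasureTheory.volume (Set.Icc (0 : ℝ) 1 ∩ {u | F t s a u = s'})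
      = ENNReal.ofReal (M.p t s a s'))

/-- Expected total reward `V_N(π)` of the coupled `N`-arm process under count policy `π`. -/
noncomputable def Vproc {S : Type} [Fintype S] [DecidableEq S] {Ω : Type} [MeasurableSpace Ω]
    (M : Arm S) (μ : MeasureTheory.Measure Ω) (π : CPolicy S)
    (F : ℕ → S → Bool → ℝ → S) (U : ℕ → ℕ → Ω → ℝ) (N : ℕ) : ℝ :=
  ∑ t ∈ Finset.range M.T,
    ∫ ω, (∑ s, ∑ a, M.r t s a * (Xc M π F U N t ω s a : ℝ)) ∂μ

/-- Diffusion regularity of a count policy `π` relative to an occupation measure `x`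
(with marginals `z`): the maps `π̃_{t,N}` induced on the diffusion statistics
`θ = (Z - N z_t)/√N ↦ (π(t,Z) - N x_t)/√N` are (1) uniformly Lipschitz (in `L¹` norm),
(2) uniformly bounded at `0`, and (3) pointwise convergent as `N → ∞`. -/
def DiffusionRegular {S : Type} [Fintype S] [DecidableEq S] (M : Arm S) (π : CPolicy S)
    (x : ℕ → S → Bool → ℝ) : Prop :=
  ∃ πt : ℕ → ℕ → (S → ℝ) → (S → Bool → ℝ),
    (∀ t N (Z : S → ℕ), 1 ≤ N → ∑ s, Z s = N → ∀ s a,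
      (π t Z s a : ℝ) = N * x t s a +
        Real.sqrt N *
          πt t N (fun s' => ((Z s' : ℝ) - N * zOf x t s') / Real.sqrt N) s a) ∧
    (∃ C₁ > (0 : ℝ), ∀ t N θ₁ θ₂,
      ∑ s, ∑ a, |πt t N θ₁ s a - πt t N θ₂ s a| ≤ C₁ * ∑ s, |θ₁ s - θ₂ s|) ∧
    (∃ C₂ > (0 : ℝ), ∀ t N, ∑ s, ∑ a, |πt t N (fun _ => 0) s a| ≤ C₂) ∧
    (∀ t θ, ∃ lim : S → Bool → ℝ,
      ∀ s a, Filter.Tendsto (fun N => πt t N θ s a) Filter.atTop (nhds (lim s a)))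

/-- The diffusion statistic `Z̃_t^N = (Z_t^N - N z_t)/√N` of the coupled process. -/
noncomputable def Ztil {S : Type} [Fintype S] [DecidableEq S] {Ω : Type}
    (M : Arm S) (π : CPolicy S) (x : ℕ → S → Bool → ℝ)
    (F : ℕ → S → Bool → ℝ → S) (U : ℕ → ℕ → Ω → ℝ) (N t : ℕ) (ω : Ω) : S → ℝ :=
  fun s => ((Zc M π F U N t ω s : ℝ) - N * zOf x t s) / Real.sqrt N

/-- The diffusion statistic `X̃_t^N = (X_t^N - N x_t)/√N` of the coupled process. -/
noncomputable def Xtil {S : Type} [Fintype S] [DecidableEq S] {Ω : Type}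
    (M : Arm S) (π : CPolicy S) (x : ℕ → S → Bool → ℝ)
    (F : ℕ → S → Bool → ℝ → S) (U : ℕ → ℕ → Ω → ℝ) (N t : ℕ) (ω : Ω) : S → Bool → ℝ :=
  fun s a => ((Xc M π F U N t ω s a : ℝ) - N * x t s a) / Real.sqrt N


/-! ### Auxiliary machinery for the proof -/

section AuxProof

open Finset MeasureTheory ProbabilityTheory

variable {S : Type} [Fintype S] [DecidableEq S]

lemma aux_sum_countOf {N : ℕ} (σ : Fin N → S) : ∑ s, countOf σ s = N := by
  classical
  have := Finset.card_eq_sum_card_fiberwise (s := (univ : Finset (Fin N)))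
    (t := (univ : Finset S)) (f := σ) (fun i _ => mem_univ (σ i))
  simpa [countOf, Finset.card_univ] using this.symm

lemma aux_card_filter_val_lt (k m : ℕ) :
    ((univ : Finset (Fin k)).filter fun a : Fin k => a.val < m).card = min m k := by
  rcases le_or_gt k m with h | h
  · have : ((univ : Finset (Fin k)).filter fun a : Fin k => a.val < m) = univ := by
      refine Finset.filter_true_of_mem fun a _ => lt_of_lt_of_le a.isLt h
    rw [this, Finset.card_univ, Fintype.card_fin, min_eq_right h]
  · have : ((univ : Finset (Fin k)).filter fun a : Fin k => a.val < m) = Finset.Iio ⟨m, h⟩ := by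
      ext a; simp [Fin.lt_def]
    rw [this, Fin.card_Iio, min_eq_left h.le]

lemma aux_card_rank_lt {N : ℕ} (F : Finset (Fin N)) (m : ℕ) :
    (F.filter fun i => (F.filter fun j => j < i).card < m).card = min m F.card := by
  classical
  set k := F.card with hk
  set e := F.orderEmbOfFin hk.symm with he
  have hmem : ∀ a : Fin k, e a ∈ F := fun a => F.orderEmbOfFin_mem hk.symm a
  have hsurj : ∀ i ∈ F, ∃ a : Fin k, e a = i := by
    intro i hi
    have : (i : Fin N) ∈ Set.range e := by
      rw [Finset.range_orderEmbOfFin]; exact hi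
    exact this
  have hrank : ∀ a : Fin k, (F.filter fun j => j < e a).card = a := by
    intro a
    have himg : F.filter (fun j => j < e a) = (univ.filter fun b : Fin k => b < a).image e := by
      ext j
      simp only [Finset.mem_filter, Finset.mem_image, Finset.mem_univ, true_and]
      constructor
      · rintro ⟨hj, hlt⟩
        obtain ⟨b, rfl⟩ := hsurj j hj
        exact ⟨b, by rwa [e.lt_iff_lt] at hlt, rfl⟩
      · rintro ⟨b, hb, rfl⟩
        exact ⟨hmem b, by rwa [e.lt_iff_lt]⟩
    rw [himg, Finset.card_image_of_injective _ e.injective]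
    have : (univ.filter fun b : Fin k => b < a) = Finset.Iio a := by ext b; simp
    rw [this, Fin.card_Iio]
  have himg2 : F.filter (fun i => (F.filter fun j => j < i).card < m)
      = (univ.filter fun a : Fin k => a.val < m).image e := by
    ext i
    simp only [Finset.mem_filter, Finset.mem_image, Finset.mem_univ, true_and]
    constructor
    · rintro ⟨hi, hlt⟩
      obtain ⟨a, rfl⟩ := hsurj i hi
      exact ⟨a, by rwa [hrank] at hlt, rfl⟩
    · rintro ⟨a, ha, rfl⟩
      exact ⟨hmem a, by rwa [hrank]⟩
  rw [himg2, Finset.card_image_of_injective _ e.injective, aux_card_filter_val_lt]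

/-- The action assigned to arm `i` by the count policy, as a function of the state profile. -/
def actOf (π : CPolicy S) (t : ℕ) {N : ℕ} (σ : Fin N → S) (i : Fin N) : Bool :=
  decide ((Finset.univ.filter fun j => σ j = σ i ∧ j < i).card < π t (countOf σ) (σ i) true)

lemma aux_card_act_true (π : CPolicy S) (hval : ValidC π) (t : ℕ) {N : ℕ} (σ : Fin N → S)
    (s : S) :
    (univ.filter fun i => σ i = s ∧ actOf π t σ i = true).card = π t (countOf σ) s true := by
  classical
  set m := π t (countOf σ) s true with hm
  have hmle : m ≤ countOf σ s := by
    have := hval t (countOf σ) s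
    omega
  have hset : (univ.filter fun i => σ i = s ∧ actOf π t σ i = true)
      = (univ.filter fun i => σ i = s).filter
          (fun i => ((univ.filter fun i' => σ i' = s).filter fun j => j < i).card < m) := by
    ext i
    simp only [Finset.mem_filter, Finset.mem_univ, true_and, actOf, decide_eq_true_eq]
    constructor
    · rintro ⟨hs, hlt⟩
      subst hs
      refine ⟨rfl, ?_⟩
      simpa [Finset.filter_filter] using hlt
    · rintro ⟨hs, hlt⟩
      subst hs
      refine ⟨rfl, ?_⟩
      simpa [Finset.filter_filter] using hlt
  rw [hset, aux_card_rank_lt]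
  exact min_eq_left hmle

lemma aux_card_act_false (π : CPolicy S) (hval : ValidC π) (t : ℕ) {N : ℕ} (σ : Fin N → S)
    (s : S) :
    (univ.filter fun i => σ i = s ∧ actOf π t σ i = false).card = π t (countOf σ) s false := by
  classical
  have hsplit := Finset.card_filter_add_card_filter_not
    (s := univ.filter fun i : Fin N => σ i = s) (p := fun i => actOf π t σ i = true)
  have h1 : ((univ.filter fun i : Fin N => σ i = s).filter fun i => actOf π t σ i = true)
      = (univ.filter fun i => σ i = s ∧ actOf π t σ i = true) := by
    rw [Finset.filter_filter]
  have h2 : ((univ.filter fun i : Fin N => σ i = s).filter fun i => ¬(actOf π t σ i = true))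
      = (univ.filter fun i => σ i = s ∧ actOf π t σ i = false) := by
    rw [Finset.filter_filter]
    apply Finset.filter_congr
    intro i _
    simp [Bool.not_eq_true]
  rw [h1, h2, aux_card_act_true π hval] at hsplit
  have hZ : (univ.filter fun i : Fin N => σ i = s).card = countOf σ s := rfl
  rw [hZ] at hsplit
  have := hval t (countOf σ) s
  omega

lemma aux_sum_comp_act (π : CPolicy S) (hval : ValidC π) (t : ℕ) {N : ℕ} (σ : Fin N → S)
    (f : S → Bool → ℝ) :
    ∑ i, f (σ i) (actOf π t σ i) = ∑ s, ∑ a, (π t (countOf σ) s a : ℝ) * f s a := by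
  classical
  have h1 : ∑ i, f (σ i) (actOf π t σ i)
      = ∑ q : S × Bool, ∑ i ∈ univ.filter (fun i => (σ i, actOf π t σ i) = q),
          f (σ i) (actOf π t σ i) :=
    (Finset.sum_fiberwise_of_maps_to (fun i _ => mem_univ _) _).symm
  rw [h1, Fintype.sum_prod_type]
  refine Finset.sum_congr rfl fun s _ => Finset.sum_congr rfl fun a _ => ?_
  have hcongr : ∀ i ∈ univ.filter (fun i => (σ i, actOf π t σ i) = (s, a)),
      f (σ i) (actOf π t σ i) = f s a := by
    intro i hi
    simp only [Finset.mem_filter, Prod.mk.injEq] at hi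
    rw [hi.2.1, hi.2.2]
  rw [Finset.sum_congr rfl hcongr, Finset.sum_const, nsmul_eq_mul]
  congr 1
  have hfe : (univ.filter fun i => (σ i, actOf π t σ i) = (s, a))
      = (univ.filter fun i => σ i = s ∧ actOf π t σ i = a) := by
    apply Finset.filter_congr; intro i _; simp [Prod.ext_iff]
  rw [hfe]
  cases a
  · rw [aux_card_act_false π hval]
  · rw [aux_card_act_true π hval]


variable {Ω : Type}

/-- The arm-state process with explicit noise values. -/
noncomputable def armState'' (M : Arm S) (π : CPolicy S) (F : ℕ → S → Bool → ℝ → S)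
    (V : ℕ → ℕ → ℝ) (N : ℕ) : ℕ → Fin N → S
  | 0 => fun _ => M.s0
  | t + 1 => fun i =>
      F t (armState'' M π F V N t i) (actOf π t (armState'' M π F V N t) i) (V i t)

lemma armState_eq (M : Arm S) (π : CPolicy S) (F : ℕ → S → Bool → ℝ → S)
    (U : ℕ → ℕ → Ω → ℝ) (N : ℕ) (t : ℕ) (ω : Ω) :
    armState M π F U N t ω = armState'' M π F (fun k t' => U k t' ω) N t := by
  induction t with
  | zero => rfl
  | succ t ih =>
    funext i
    simp only [armState, armState'', actOf]
    rw [ih]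

lemma armState_succ (M : Arm S) (π : CPolicy S) (F : ℕ → S → Bool → ℝ → S)
    (U : ℕ → ℕ → Ω → ℝ) (N t : ℕ) (ω : Ω) (i : Fin N) :
    armState M π F U N (t + 1) ω i
      = F t (armState M π F U N t ω i) (actOf π t (armState M π F U N t ω) i) (U i t ω) := rfl

lemma armState''_congr (M : Arm S) (π : CPolicy S) (F : ℕ → S → Bool → ℝ → S)
    {V V' : ℕ → ℕ → ℝ} {N : ℕ} (t : ℕ)
    (h : ∀ k, k < N → ∀ t', t' < t → V k t' = V' k t') :
    armState'' M π F V N t = armState'' M π F V' N t := by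
  induction t with
  | zero => rfl
  | succ t ih =>
    have ht : armState'' M π F V N t = armState'' M π F V' N t :=
      ih fun k hk t' ht' => h k hk t' (ht'.trans (Nat.lt_succ_self t))
    funext i
    simp only [armState'']
    rw [ht, h i i.isLt t (Nat.lt_succ_self t)]

variable [MeasurableSpace S] [DiscreteMeasurableSpace S]

lemma measurable_armState'' (M : Arm S) (π : CPolicy S) (F : ℕ → S → Bool → ℝ → S)
    (hF : ∀ t s a, Measurable (F t s a)) (N t : ℕ) :
    Measurable fun V : ℕ → ℕ → ℝ => armState'' M π F V N t := by
  induction t with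
  | zero => exact measurable_const
  | succ t ih =>
    refine measurable_pi_iff.mpr fun i => ?_
    have hrw : (fun V : ℕ → ℕ → ℝ => armState'' M π F V N (t + 1) i)
        = (fun q : ℝ × (Fin N → S) => F t (q.2 i) (actOf π t q.2 i) q.1)
          ∘ (fun V => (V i t, armState'' M π F V N t)) := rfl
    rw [hrw]
    have hm2 : Measurable fun q : ℝ × (Fin N → S) => F t (q.2 i) (actOf π t q.2 i) q.1 :=
      measurable_from_prod_countable_left fun σ => hF t (σ i) (actOf π t σ i)
    exact hm2.comp (((measurable_pi_apply t).comp (measurable_pi_apply (i : ℕ))).prodMk ih)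

variable [MeasurableSpace Ω]

lemma measurable_armState (M : Arm S) (π : CPolicy S) (F : ℕ → S → Bool → ℝ → S)
    (U : ℕ → ℕ → Ω → ℝ) (hU : ∀ i t, Measurable (U i t))
    (hF : ∀ t s a, Measurable (F t s a)) (N t : ℕ) :
    Measurable fun ω => armState M π F U N t ω := by
  have hrw : (fun ω => armState M π F U N t ω)
      = (fun V => armState'' M π F V N t) ∘ (fun ω k t' => U k t' ω) := by
    funext ω; exact armState_eq M π F U N t ω
  rw [hrw]
  exact (measurable_armState'' M π F hF N t).comp
    (measurable_pi_lambda _ fun k => measurable_pi_lambda _ fun t' => hU k t')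

lemma aux_integrable_pair (μ : MeasureTheory.Measure Ω) [MeasureTheory.IsProbabilityMeasure μ]
    (M : Arm S) (π : CPolicy S) (F : ℕ → S → Bool → ℝ → S) (U : ℕ → ℕ → Ω → ℝ)
    (hU : ∀ i t, Measurable (U i t)) (hF : ∀ t s a, Measurable (F t s a)) (N t₁ t₂ : ℕ)
    (φ : (Fin N → S) → (Fin N → S) → ℝ) (f : Ω → ℝ)
    (hf : ∀ ω, f ω = φ (armState M π F U N t₁ ω) (armState M π F U N t₂ ω)) :
    MeasureTheory.Integrable f μ := by
  have hg : Measurable fun ω => (armState M π F U N t₁ ω, armState M π F U N t₂ ω) :=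
    (measurable_armState M π F U hU hF N t₁).prodMk (measurable_armState M π F U hU hF N t₂)
  have hmeas : Measurable f := by
    have hrw : f = (fun q : (Fin N → S) × (Fin N → S) => φ q.1 q.2)
        ∘ (fun ω => (armState M π F U N t₁ ω, armState M π F U N t₂ ω)) := funext hf
    rw [hrw]
    exact (measurable_of_countable _).comp hg
  refine (MeasureTheory.integrable_const
      (∑ q : (Fin N → S) × (Fin N → S), |φ q.1 q.2|)).mono'
    hmeas.aestronglyMeasurable (Filter.Eventually.of_forall fun ω => ?_)
  rw [Real.norm_eq_abs, hf ω]
  exact Finset.single_le_sum (f := fun q : (Fin N → S) × (Fin N → S) => |φ q.1 q.2|)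
    (fun q _ => abs_nonneg _) (mem_univ (armState M π F U N t₁ ω, armState M π F U N t₂ ω))

/-- The centered one-step transition indicator for arm `i`. -/
noncomputable def Dfun (M : Arm S) (π : CPolicy S) (F : ℕ → S → Bool → ℝ → S)
    (U : ℕ → ℕ → Ω → ℝ) (N t : ℕ) (s' : S) (i : Fin N) (ω : Ω) : ℝ :=
  (if armState M π F U N (t + 1) ω i = s' then 1 else 0)
    - M.p t (armState M π F U N t ω i) (actOf π t (armState M π F U N t ω) i) s'


lemma aux_p_le_one (M : Arm S) (t : ℕ) (s : S) (a : Bool) (s' : S) : M.p t s a s' ≤ 1 := by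
  have h := M.p_sum t s a
  calc M.p t s a s' ≤ ∑ s'', M.p t s a s''
        := Finset.single_le_sum (fun s'' _ => M.p_nonneg t s a s'') (mem_univ s')
    _ = 1 := h

lemma aux_abs_Dfun_le_one (M : Arm S) (π : CPolicy S) (F : ℕ → S → Bool → ℝ → S)
    (U : ℕ → ℕ → Ω → ℝ) (N t : ℕ) (s' : S) (i : Fin N) (ω : Ω) :
    |Dfun M π F U N t s' i ω| ≤ 1 := by
  have h0 := M.p_nonneg t (armState M π F U N t ω i)
    (actOf π t (armState M π F U N t ω) i) s'
  have h1 := aux_p_le_one M t (armState M π F U N t ω i)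
    (actOf π t (armState M π F U N t ω) i) s'
  rw [Dfun, abs_le]
  constructor <;> split_ifs <;> linarith

/-- Reconstruction of a full noise array from the values indexed by `T0`. -/
noncomputable def PhiV (T0 : Finset (ℕ × ℕ)) (v : T0 → ℝ) : ℕ → ℕ → ℝ :=
  fun k t' => if hm : (k, t') ∈ T0 then v ⟨(k, t'), hm⟩ else 0

lemma measurable_PhiV (T0 : Finset (ℕ × ℕ)) : Measurable (PhiV T0) := by
  refine measurable_pi_lambda _ fun k => measurable_pi_lambda _ fun t' => ?_
  unfold PhiV
  by_cases hm : (k, t') ∈ T0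
  · simp only [dif_pos hm]; exact measurable_pi_apply _
  · simp only [dif_neg hm]; exact measurable_const

/-- The dependence of `h_q` on the noise variables indexed by `T0`. -/
noncomputable def Phi (M : Arm S) (π : CPolicy S) (F : ℕ → S → Bool → ℝ → S) (N t : ℕ)
    (T0 : Finset (ℕ × ℕ)) (q : S × Bool) (s' : S) (i j : Fin N) (v : T0 → ℝ) : ℝ :=
  if (armState'' M π F (PhiV T0 v) N t i,
      actOf π t (armState'' M π F (PhiV T0 v) N t) i) = q then
    (if F t (armState'' M π F (PhiV T0 v) N t j)
          (actOf π t (armState'' M π F (PhiV T0 v) N t) j) (PhiV T0 v j t) = s'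
      then (1 : ℝ) else 0)
      - M.p t (armState'' M π F (PhiV T0 v) N t j)
          (actOf π t (armState'' M π F (PhiV T0 v) N t) j) s'
  else 0

lemma measurable_Phi (M : Arm S) (π : CPolicy S) (F : ℕ → S → Bool → ℝ → S)
    (hF : ∀ t s a, Measurable (F t s a)) (N t : ℕ) (T0 : Finset (ℕ × ℕ)) (q : S × Bool)
    (s' : S) (i j : Fin N) :
    Measurable (Phi M π F N t T0 q s' i j) := by
  have hVm : Measurable (PhiV T0) := measurable_PhiV T0
  have hout : Measurable fun w : ℝ × (Fin N → S) =>
      (if (w.2 i, actOf π t w.2 i) = q then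
        (if F t (w.2 j) (actOf π t w.2 j) w.1 = s' then (1 : ℝ) else 0)
          - M.p t (w.2 j) (actOf π t w.2 j) s'
      else 0) := by
    refine measurable_from_prod_countable_left fun τ => ?_
    by_cases hc : (τ i, actOf π t τ i) = q
    · simp only [if_pos hc]
      refine Measurable.sub ?_ measurable_const
      refine Measurable.ite ?_ measurable_const measurable_const
      exact (hF t (τ j) (actOf π t τ j)) (MeasurableSet.singleton s')
    · simp only [if_neg hc]; exact measurable_const
  have h1 : Measurable fun v : T0 → ℝ => PhiV T0 v (j : ℕ) t :=
    (measurable_pi_apply t).comp ((measurable_pi_apply ((j : ℕ))).comp hVm)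
  have h2 : Measurable fun v : T0 → ℝ => armState'' M π F (PhiV T0 v) N t :=
    (measurable_armState'' M π F hF N t).comp hVm
  have h3 : Measurable fun v : T0 → ℝ => (PhiV T0 v (j : ℕ) t, armState'' M π F (PhiV T0 v) N t) :=
    h1.prodMk h2
  exact hout.comp h3

lemma aux_cross_term (μ : MeasureTheory.Measure Ω) [MeasureTheory.IsProbabilityMeasure μ]
    (M : Arm S) (π : CPolicy S) (F : ℕ → S → Bool → ℝ → S) (U : ℕ → ℕ → Ω → ℝ)
    (hFU : Innovations M μ F U) {N : ℕ} (t : ℕ) (s' : S) {i j : Fin N} (hij : i ≠ j) :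
    ∫ ω, Dfun M π F U N t s' i ω * Dfun M π F U N t s' j ω ∂μ = 0 := by
  classical
  obtain ⟨hU, hUind, hUdist, hF, hFvol⟩ := hFU
  set T0 : Finset (ℕ × ℕ) := (Finset.range N ×ˢ Finset.range t) ∪ {((j : ℕ), t)} with hT0
  have hmemT0 : ∀ k, k < N → ∀ t', t' < t → (k, t') ∈ T0 := by
    intro k hk t' ht'
    exact Finset.mem_union_left _ (Finset.mem_product.mpr ⟨Finset.mem_range.mpr hk,
      Finset.mem_range.mpr ht'⟩)
  have hjT0 : ((j : ℕ), t) ∈ T0 := Finset.mem_union_right _ (Finset.mem_singleton_self _)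
  have hiT0 : ((i : ℕ), t) ∉ T0 := by
    intro hmem
    rcases Finset.mem_union.mp hmem with hmem | hmem
    · exact absurd (Finset.mem_range.mp (Finset.mem_product.mp hmem).2) (lt_irrefl t)
    · rw [Finset.mem_singleton, Prod.mk.injEq] at hmem
      exact hij (Fin.val_injective hmem.1)
  have hdisj : Disjoint T0 ({((i : ℕ), t)} : Finset (ℕ × ℕ)) :=
    Finset.disjoint_singleton_right.mpr hiT0
  -- the function of the noise at `(i,t)`
  set g : S × Bool → ℝ → ℝ := fun q u =>
    (if F t q.1 q.2 u = s' then (1 : ℝ) else 0) - M.p t q.1 q.2 s' with hg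
  have hgm : ∀ q, Measurable (g q) := by
    intro q
    refine Measurable.sub ?_ measurable_const
    refine Measurable.ite ?_ measurable_const measurable_const
    exact (hF t q.1 q.2) (MeasurableSet.singleton s')
  -- the `h_q` part
  set h : S × Bool → Ω → ℝ := fun q ω =>
    if (armState M π F U N t ω i, actOf π t (armState M π F U N t ω) i) = q then
      Dfun M π F U N t s' j ω
    else 0 with hh
  -- pointwise decomposition
  have hdec : ∀ ω, Dfun M π F U N t s' i ω * Dfun M π F U N t s' j ω
      = ∑ q : S × Bool, h q ω * g q (U i t ω) := by
    intro ω
    rw [Finset.sum_eq_single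
      ((armState M π F U N t ω i, actOf π t (armState M π F U N t ω) i) : S × Bool)]
    · simp only [hh, hg, if_pos rfl]
      have : Dfun M π F U N t s' i ω
          = (if F t (armState M π F U N t ω i) (actOf π t (armState M π F U N t ω) i)
                (U i t ω) = s' then (1:ℝ) else 0)
            - M.p t (armState M π F U N t ω i) (actOf π t (armState M π F U N t ω) i) s' := by
        rw [Dfun, armState_succ]
      rw [this]; ring
    · intro q _ hq
      simp only [hh]
      rw [if_neg fun hc => hq hc.symm]
      exact zero_mul _
    · intro hc; exact absurd (mem_univ _) hc
  -- each summand has zero integral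
  have key : ∀ q : S × Bool, ∫ ω, h q ω * g q (U i t ω) ∂μ = 0 := by
    intro q
    -- independence
    have hPhiW : h q = Phi M π F N t T0 q s' i j ∘ (fun ω (e : T0) => U (e : ℕ × ℕ).1 (e : ℕ × ℕ).2 ω) := by
      funext ω
      show h q ω = Phi M π F N t T0 q s' i j (fun e => U (e : ℕ × ℕ).1 (e : ℕ × ℕ).2 ω)
      rw [Phi]
      have hτ : armState'' M π F (PhiV T0 (fun e : T0 => U (e : ℕ × ℕ).1 (e : ℕ × ℕ).2 ω)) N t
          = armState M π F U N t ω := by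
        rw [armState_eq M π F U N t ω]
        refine armState''_congr M π F t fun k hk t' ht' => ?_
        unfold PhiV
        rw [dif_pos (hmemT0 k hk t' ht')]
      have hVjt : PhiV T0 (fun e : T0 => U (e : ℕ × ℕ).1 (e : ℕ × ℕ).2 ω) (j : ℕ) t
          = U (j : ℕ) t ω := by
        unfold PhiV
        rw [dif_pos hjT0]
      rw [hτ, hVjt]
      simp only [hh, hg]
      by_cases hc : (armState M π F U N t ω i, actOf π t (armState M π F U N t ω) i) = q
      · rw [if_pos hc, if_pos hc, Dfun, armState_succ]
      · rw [if_neg hc, if_neg hc]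
    have hind0 := hUind.indepFun_finset T0 {((i : ℕ), t)} hdisj (fun e => hU e.1 e.2)
    have hψm : Measurable fun w : (({((i : ℕ), t)} : Finset (ℕ × ℕ)) : Type) → ℝ =>
        g q (w ⟨((i : ℕ), t), Finset.mem_singleton_self _⟩) :=
      (hgm q).comp (measurable_pi_apply _)
    have hind : IndepFun (h q) (fun ω => g q (U i t ω)) μ := by
      have hc := hind0.comp (measurable_Phi M π F hF N t T0 q s' i j) hψm
      rw [hPhiW]
      exact hc
    have hDj : ∀ ω, |Dfun M π F U N t s' j ω| ≤ 1 := aux_abs_Dfun_le_one M π F U N t s' j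
    have hhmeas : Measurable (h q) := by
      rw [hPhiW]
      exact (measurable_Phi M π F hF N t T0 q s' i j).comp
        (measurable_pi_lambda _ fun e => hU _ _)
    have hgmeas : Measurable fun ω => g q (U i t ω) := (hgm q).comp (hU i t)
    have hzero : ∫ ω, g q (U i t ω) ∂μ = 0 := by
      have hmap : ∫ ω, g q (U i t ω) ∂μ = ∫ u, g q u ∂(MeasureTheory.Measure.map (U i t) μ) :=
        (MeasureTheory.integral_map (hU i t).aemeasurable (hgm q).aestronglyMeasurable).symm
      rw [hmap, hUdist i t]
      haveI : MeasureTheory.IsFiniteMeasure (MeasureTheory.volume.restrict (Set.Icc (0:ℝ) 1)) := by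
        constructor
        rw [MeasureTheory.Measure.restrict_apply_univ, Real.volume_Icc]
        exact ENNReal.ofReal_lt_top
      have hAmeas : MeasurableSet {u : ℝ | F t q.1 q.2 u = s'} :=
        (hF t q.1 q.2) (MeasurableSet.singleton s')
      have hgind : (g q) = fun u => Set.indicator {u : ℝ | F t q.1 q.2 u = s'}
          (fun _ => (1:ℝ)) u - M.p t q.1 q.2 s' := by
        funext u
        rw [hg]
        simp only [Set.indicator_apply, Set.mem_setOf_eq]
      rw [hgind]
      rw [MeasureTheory.integral_sub
        ((MeasureTheory.integrable_const (1:ℝ)).indicator hAmeas)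
        (MeasureTheory.integrable_const _)]
      rw [MeasureTheory.integral_indicator_const (1:ℝ) hAmeas,
        MeasureTheory.integral_const, measureReal_def, measureReal_def]
      rw [MeasureTheory.Measure.restrict_apply hAmeas,
        MeasureTheory.Measure.restrict_apply_univ, Real.volume_Icc, Set.inter_comm,
        hFvol t q.1 q.2 s']
      rw [ENNReal.toReal_ofReal (M.p_nonneg t q.1 q.2 s')]
      norm_num
    calc ∫ ω, h q ω * g q (U i t ω) ∂μ
        = MeasureTheory.integral μ (h q * fun ω => g q (U i t ω)) := rfl
      _ = (∫ ω, h q ω ∂μ) * ∫ ω, g q (U i t ω) ∂μ :=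
          hind.integral_mul_eq_mul_integral hhmeas.aestronglyMeasurable hgmeas.aestronglyMeasurable
      _ = 0 := by rw [hzero, mul_zero]
  -- combine
  have hintg : ∀ q : S × Bool, MeasureTheory.Integrable (fun ω => h q ω * g q (U i t ω)) μ := by
    intro q
    have hhmeas : Measurable (h q) := by
      refine Measurable.ite ?_ ?_ measurable_const
      · have : MeasurableSet {w : Fin N → S | (w i, actOf π t w i) = q} :=
          MeasurableSet.of_discrete
        exact (measurable_armState M π F U hU hF N t) this
      · -- measurability of Dfun j
        have : Measurable fun ω => Dfun M π F U N t s' j ω := by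
          have h1 := measurable_armState M π F U hU hF N t
          have h2 := measurable_armState M π F U hU hF N (t+1)
          rw [show (fun ω => Dfun M π F U N t s' j ω)
              = (fun w : (Fin N → S) × (Fin N → S) =>
                  (if w.2 j = s' then (1:ℝ) else 0)
                    - M.p t (w.1 j) (actOf π t w.1 j) s')
                ∘ (fun ω => (armState M π F U N t ω, armState M π F U N (t+1) ω)) from rfl]
          exact (measurable_of_countable _).comp (h1.prodMk h2)
        exact this
    have hb : ∀ ω, ‖h q ω * g q (U i t ω)‖ ≤ 2 * 2 := by
      intro ω
      rw [norm_mul]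
      have h1 : ‖h q ω‖ ≤ 2 := by
        simp only [Real.norm_eq_abs, hh]
        split_ifs
        · exact le_trans (aux_abs_Dfun_le_one M π F U N t s' j ω) (by norm_num)
        · simp
      have h2 : ‖g q (U i t ω)‖ ≤ 2 := by
        simp only [Real.norm_eq_abs, hg]
        have := M.p_nonneg t q.1 q.2 s'
        have := aux_p_le_one M t q.1 q.2 s'
        split_ifs <;> rw [abs_le] <;> constructor <;> linarith
      exact mul_le_mul h1 h2 (norm_nonneg _) (by norm_num)
    exact (MeasureTheory.integrable_const (2*2 : ℝ)).mono'
      (hhmeas.mul ((hgm q).comp (hU i t))).aestronglyMeasurable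
      (Filter.Eventually.of_forall hb)
  calc ∫ ω, Dfun M π F U N t s' i ω * Dfun M π F U N t s' j ω ∂μ
      = ∫ ω, ∑ q : S × Bool, h q ω * g q (U i t ω) ∂μ := by
        refine MeasureTheory.integral_congr_ae (Filter.Eventually.of_forall fun ω => ?_)
        exact hdec ω
    _ = ∑ q : S × Bool, ∫ ω, h q ω * g q (U i t ω) ∂μ :=
        MeasureTheory.integral_finset_sum _ fun q _ => hintg q
    _ = 0 := by
        rw [Finset.sum_congr rfl fun q _ => key q, Finset.sum_const, smul_zero]


lemma aux_integrable_D_mul (μ : MeasureTheory.Measure Ω) [MeasureTheory.IsProbabilityMeasure μ]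
    (M : Arm S) (π : CPolicy S) (F : ℕ → S → Bool → ℝ → S) (U : ℕ → ℕ → Ω → ℝ)
    (hU : ∀ i t, Measurable (U i t)) (hF : ∀ t s a, Measurable (F t s a))
    (N t : ℕ) (s' : S) (i j : Fin N) :
    MeasureTheory.Integrable (fun ω => Dfun M π F U N t s' i ω * Dfun M π F U N t s' j ω) μ := by
  refine aux_integrable_pair μ M π F U hU hF N t (t + 1)
    (φ := fun σ τ =>
      ((if τ i = s' then (1:ℝ) else 0) - M.p t (σ i) (actOf π t σ i) s')
      * ((if τ j = s' then (1:ℝ) else 0) - M.p t (σ j) (actOf π t σ j) s')) _ fun ω => rfl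

lemma aux_var_le (μ : MeasureTheory.Measure Ω) [MeasureTheory.IsProbabilityMeasure μ]
    (M : Arm S) (π : CPolicy S) (F : ℕ → S → Bool → ℝ → S) (U : ℕ → ℕ → Ω → ℝ)
    (hFU : Innovations M μ F U) (N t : ℕ) (s' : S) :
    ∫ ω, (∑ i : Fin N, Dfun M π F U N t s' i ω) ^ 2 ∂μ ≤ N := by
  obtain ⟨hU, hUind, hUdist, hF, hFvol⟩ := hFU
  have hint : ∀ i j : Fin N,
      MeasureTheory.Integrable (fun ω => Dfun M π F U N t s' i ω * Dfun M π F U N t s' j ω) μ :=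
    aux_integrable_D_mul μ M π F U hU hF N t s'
  have hsq : ∀ ω : Ω, (∑ i : Fin N, Dfun M π F U N t s' i ω) ^ 2
      = ∑ i : Fin N, ∑ j : Fin N, Dfun M π F U N t s' i ω * Dfun M π F U N t s' j ω := by
    intro ω
    rw [sq, Finset.sum_mul_sum]
  calc ∫ ω, (∑ i : Fin N, Dfun M π F U N t s' i ω) ^ 2 ∂μ
      = ∫ ω, ∑ i : Fin N, ∑ j : Fin N, Dfun M π F U N t s' i ω * Dfun M π F U N t s' j ω ∂μ :=
        MeasureTheory.integral_congr_ae (Filter.Eventually.of_forall hsq)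
    _ = ∑ i : Fin N, ∫ ω, ∑ j : Fin N, Dfun M π F U N t s' i ω * Dfun M π F U N t s' j ω ∂μ :=
        MeasureTheory.integral_finset_sum _ fun i _ =>
          MeasureTheory.integrable_finset_sum _ fun j _ => hint i j
    _ = ∑ i : Fin N, ∑ j : Fin N, ∫ ω, Dfun M π F U N t s' i ω * Dfun M π F U N t s' j ω ∂μ :=
        Finset.sum_congr rfl fun i _ => MeasureTheory.integral_finset_sum _ fun j _ => hint i j
    _ = ∑ i : Fin N, ∫ ω, Dfun M π F U N t s' i ω * Dfun M π F U N t s' i ω ∂μ := by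
        refine Finset.sum_congr rfl fun i _ => ?_
        rw [Finset.sum_eq_single i]
        · intro j _ hji
          exact aux_cross_term μ M π F U ⟨hU, hUind, hUdist, hF, hFvol⟩ t s' (Ne.symm hji)
        · intro hc; exact absurd (mem_univ _) hc
    _ ≤ ∑ _i : Fin N, (1 : ℝ) := by
        refine Finset.sum_le_sum fun i _ => ?_
        have hb : ∀ ω, Dfun M π F U N t s' i ω * Dfun M π F U N t s' i ω ≤ 1 := by
          intro ω
          have h1 := aux_abs_Dfun_le_one M π F U N t s' i ω
          have := abs_nonneg (Dfun M π F U N t s' i ω)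
          nlinarith [abs_mul_abs_self (Dfun M π F U N t s' i ω)]
        calc ∫ ω, Dfun M π F U N t s' i ω * Dfun M π F U N t s' i ω ∂μ
            ≤ ∫ _ω, (1 : ℝ) ∂μ :=
              MeasureTheory.integral_mono (hint i i) (MeasureTheory.integrable_const 1) hb
          _ = 1 := by simp
    _ = N := by simp


lemma aux_z0 (M : Arm S) (x : ℕ → S → Bool → ℝ) (hfe : LPFeasible M x) (s : S) :
    zOf x 0 s = if s = M.s0 then 1 else 0 := by
  obtain ⟨hnn, -, hinit, hinit1, -⟩ := hfe
  by_cases hs : s = M.s0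
  · subst hs
    rw [if_pos rfl, zOf]
    have h1 := hinit1
    rw [Finset.sum_eq_single M.s0] at h1
    · exact h1
    · intro b _ hb
      exact Finset.sum_eq_zero fun a _ => hinit b a hb
    · intro hc; exact absurd (mem_univ _) hc
  · rw [if_neg hs, zOf]
    exact Finset.sum_eq_zero fun a _ => hinit s a hs

lemma aux_Zc_zero (M : Arm S) (π : CPolicy S) (F : ℕ → S → Bool → ℝ → S)
    (U : ℕ → ℕ → Ω → ℝ) (N : ℕ) (ω : Ω) (s : S) :
    Zc M π F U N 0 ω s = if s = M.s0 then N else 0 := by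
  have h0 : armState M π F U N 0 ω = fun _ => M.s0 := rfl
  rw [Zc, h0, countOf]
  by_cases hs : s = M.s0
  · rw [if_pos hs]
    have : (univ.filter fun _ : Fin N => M.s0 = s) = univ :=
      Finset.filter_true_of_mem fun _ _ => hs.symm
    rw [this, Finset.card_univ, Fintype.card_fin]
  · rw [if_neg hs]
    have : (univ.filter fun _ : Fin N => M.s0 = s) = ∅ :=
      Finset.filter_false_of_mem fun _ _ hc => hs hc.symm
    rw [this, Finset.card_empty]

lemma aux_Ztil_zero (M : Arm S) (π : CPolicy S) (x : ℕ → S → Bool → ℝ)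
    (F : ℕ → S → Bool → ℝ → S) (U : ℕ → ℕ → Ω → ℝ) (hfe : LPFeasible M x)
    (N : ℕ) (ω : Ω) (s : S) :
    Ztil M π x F U N 0 ω s = 0 := by
  rw [Ztil, aux_Zc_zero, aux_z0 M x hfe]
  split_ifs <;> simp

lemma aux_Ztil_succ (M : Arm S) (π : CPolicy S) (x : ℕ → S → Bool → ℝ)
    (F : ℕ → S → Bool → ℝ → S) (U : ℕ → ℕ → Ω → ℝ) (hfe : LPFeasible M x)
    (hval : ValidC π) {N t : ℕ} (hN : 1 ≤ N) (ht : t + 1 < M.T) (ω : Ω) (s' : S) :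
    Ztil M π x F U N (t + 1) ω s'
      = (∑ i : Fin N, Dfun M π F U N t s' i ω) / Real.sqrt N
        + ∑ s, ∑ a, M.p t s a s' * Xtil M π x F U N t ω s a := by
  have hZc : (Zc M π F U N (t + 1) ω s' : ℝ)
      = ∑ i : Fin N, (if armState M π F U N (t + 1) ω i = s' then (1 : ℝ) else 0) := by
    rw [Zc, countOf, Finset.card_filter, Nat.cast_sum]
    exact Finset.sum_congr rfl fun i _ => by split_ifs <;> simp
  have hD : ∑ i : Fin N, Dfun M π F U N t s' i ω
      = (Zc M π F U N (t + 1) ω s' : ℝ)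
        - ∑ s, ∑ a, (Xc M π F U N t ω s a : ℝ) * M.p t s a s' := by
    simp only [Xc, Zc]
    rw [show ((countOf (armState M π F U N (t + 1) ω) s' : ℝ))
        = ∑ i : Fin N, (if armState M π F U N (t + 1) ω i = s' then (1:ℝ) else 0) from hZc,
      ← aux_sum_comp_act π hval t (armState M π F U N t ω) (fun s a => M.p t s a s'),
      ← Finset.sum_sub_distrib]
    rfl
  have hz : zOf x (t + 1) s' = ∑ s, ∑ a, x t s a * M.p t s a s' := by
    rw [zOf]
    exact hfe.2.2.2.2 t ht s'
  have hrhs : ∑ s, ∑ a, M.p t s a s' * Xtil M π x F U N t ω s a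
      = (∑ s, ∑ a, M.p t s a s' * ((Xc M π F U N t ω s a : ℝ) - N * x t s a))
          / Real.sqrt N := by
    rw [Finset.sum_div]
    refine Finset.sum_congr rfl fun s _ => ?_
    rw [Finset.sum_div]
    refine Finset.sum_congr rfl fun a _ => ?_
    rw [Xtil, mul_div_assoc]
  have hexp : ∑ s, ∑ a, M.p t s a s' * ((Xc M π F U N t ω s a : ℝ) - N * x t s a)
      = (∑ s, ∑ a, (Xc M π F U N t ω s a : ℝ) * M.p t s a s')
        - N * ∑ s, ∑ a, x t s a * M.p t s a s' := by
    rw [Finset.mul_sum, ← Finset.sum_sub_distrib]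
    refine Finset.sum_congr rfl fun s _ => ?_
    rw [Finset.mul_sum, ← Finset.sum_sub_distrib]
    refine Finset.sum_congr rfl fun a _ => ?_
    ring
  rw [Ztil, hz, hrhs, ← add_div]
  congr 1
  rw [hexp, hD]
  ring

lemma aux_Xtil_eq (M : Arm S) (π : CPolicy S) (x : ℕ → S → Bool → ℝ)
    (F : ℕ → S → Bool → ℝ → S) (U : ℕ → ℕ → Ω → ℝ)
    (πt : ℕ → ℕ → (S → ℝ) → (S → Bool → ℝ))
    (hrep : ∀ t N (Z : S → ℕ), 1 ≤ N → ∑ s, Z s = N → ∀ s a,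
      (π t Z s a : ℝ) = N * x t s a +
        Real.sqrt N * πt t N (fun s'' => ((Z s'' : ℝ) - N * zOf x t s'') / Real.sqrt N) s a)
    {N t : ℕ} (hN : 1 ≤ N) (ω : Ω) (s : S) (a : Bool) :
    Xtil M π x F U N t ω s a = πt t N (Ztil M π x F U N t ω) s a := by
  have hs0 : Real.sqrt N ≠ 0 := by
    refine ne_of_gt (Real.sqrt_pos.mpr ?_)
    exact_mod_cast Nat.lt_of_lt_of_le Nat.zero_lt_one hN
  have hsum : ∑ s'', Zc M π F U N t ω s'' = N := aux_sum_countOf _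
  have h := hrep t N (Zc M π F U N t ω) hN hsum s a
  show ((π t (Zc M π F U N t ω) s a : ℝ) - (N : ℝ) * x t s a) / Real.sqrt N
      = πt t N (Ztil M π x F U N t ω) s a
  rw [h, add_sub_cancel_left, mul_div_cancel_left₀ _ hs0]
  rfl


lemma aux_Xtil_abs_le (M : Arm S) (π : CPolicy S) (x : ℕ → S → Bool → ℝ)
    (F : ℕ → S → Bool → ℝ → S) (U : ℕ → ℕ → Ω → ℝ)
    (πt : ℕ → ℕ → (S → ℝ) → (S → Bool → ℝ))
    (hrep : ∀ t N (Z : S → ℕ), 1 ≤ N → ∑ s, Z s = N → ∀ s a,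
      (π t Z s a : ℝ) = N * x t s a +
        Real.sqrt N * πt t N (fun s'' => ((Z s'' : ℝ) - N * zOf x t s'') / Real.sqrt N) s a)
    {C₁ C₂ : ℝ}
    (hLip : ∀ t N θ₁ θ₂, ∑ s, ∑ a, |πt t N θ₁ s a - πt t N θ₂ s a| ≤ C₁ * ∑ s, |θ₁ s - θ₂ s|)
    (hB0 : ∀ t N, ∑ s, ∑ a, |πt t N (fun _ => 0) s a| ≤ C₂)
    {N t : ℕ} (hN : 1 ≤ N) (ω : Ω) :
    ∑ s, ∑ a, |Xtil M π x F U N t ω s a|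
      ≤ C₁ * ∑ s, |Ztil M π x F U N t ω s| + C₂ := by
  set θ := Ztil M π x F U N t ω with hθ
  calc ∑ s, ∑ a, |Xtil M π x F U N t ω s a| = ∑ s, ∑ a, |πt t N θ s a| := by
        refine Finset.sum_congr rfl fun s _ => Finset.sum_congr rfl fun a _ => ?_
        rw [aux_Xtil_eq M π x F U πt hrep hN ω s a]
    _ ≤ ∑ s, ∑ a, (|πt t N θ s a - πt t N (fun _ => 0) s a| + |πt t N (fun _ => 0) s a|) := by
        refine Finset.sum_le_sum fun s _ => Finset.sum_le_sum fun a _ => ?_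
        have h := abs_add_le (πt t N θ s a - πt t N (fun _ => 0) s a) (πt t N (fun _ => 0) s a)
        simpa using h
    _ = (∑ s, ∑ a, |πt t N θ s a - πt t N (fun _ => 0) s a|)
        + ∑ s, ∑ a, |πt t N (fun _ => 0) s a| := by
        rw [← Finset.sum_add_distrib]
        exact Finset.sum_congr rfl fun s _ => Finset.sum_add_distrib
    _ ≤ C₁ * (∑ s, |θ s - 0|) + C₂ := add_le_add (hLip t N θ (fun _ => 0)) (hB0 t N)
    _ = C₁ * ∑ s, |θ s| + C₂ := by simp

end AuxProof

/-- If a policy `π` is diffusion regular, then the second moments of the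
diffusion statistics are uniformly bounded: there is a constant `C` with
`E‖Z̃_t^N‖₂² ≤ C` and `E‖X̃_t^N‖₂² ≤ C` for all `t ∈ [T]` and all `N`. -/
theorem diffusionRegular_implies_second_moment_bound
    {S : Type} [Fintype S] [DecidableEq S] [MeasurableSpace S] [DiscreteMeasurableSpace S]
    {Ω : Type} [MeasurableSpace Ω] (μ : MeasureTheory.Measure Ω)
    [MeasureTheory.IsProbabilityMeasure μ]
    (M : Arm S) (x : ℕ → S → Bool → ℝ) (hx : LPOptimal M x)
    (π : CPolicy S) (hval : ValidC π) (hdr : DiffusionRegular M π x)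
    (F : ℕ → S → Bool → ℝ → S) (U : ℕ → ℕ → Ω → ℝ) (hFU : Innovations M μ F U) :
    ∃ C : ℝ, ∀ t, t < M.T → ∀ N : ℕ, 1 ≤ N →
      (∫ ω, (∑ s, (Ztil M π x F U N t ω s) ^ 2) ∂μ) ≤ C ∧
      (∫ ω, (∑ s, ∑ a, (Xtil M π x F U N t ω s a) ^ 2) ∂μ) ≤ C := by
  classical
  obtain ⟨πt, hrep, ⟨C₁, hC₁pos, hLip⟩, ⟨C₂, hC₂pos, hB0⟩, -⟩ := hdr
  have hUm : ∀ i t, Measurable (U i t) := hFU.1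
  have hFm : ∀ t s a, Measurable (F t s a) := hFU.2.2.2.1
  have hfe : LPFeasible M x := hx.1
  set cS : ℝ := (Fintype.card S : ℝ) with hcS
  have hcSnn : (0 : ℝ) ≤ cS := Nat.cast_nonneg _
  -- the squared-sum bound for the X statistics
  have habs2 : ∀ (N t : ℕ), 1 ≤ N → ∀ ω,
      (∑ s, ∑ a, |Xtil M π x F U N t ω s a|) ^ 2
        ≤ 2 * C₁ ^ 2 * cS * (∑ s, (Ztil M π x F U N t ω s) ^ 2) + 2 * C₂ ^ 2 := by
    intro N t hN ω
    have h2 := aux_Xtil_abs_le M π x F U πt hrep hLip hB0 (t := t) hN ω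
    have h3 : (∑ s, |Ztil M π x F U N t ω s|) ^ 2
        ≤ cS * ∑ s, (Ztil M π x F U N t ω s) ^ 2 := by
      have h := sq_sum_le_card_mul_sum_sq (s := (univ : Finset S))
        (f := fun s => |Ztil M π x F U N t ω s|)
      simpa [sq_abs, Finset.card_univ] using h
    have hXnn : 0 ≤ ∑ s, ∑ a, |Xtil M π x F U N t ω s a| :=
      Finset.sum_nonneg fun s _ => Finset.sum_nonneg fun a _ => abs_nonneg _
    have h4 : (∑ s, ∑ a, |Xtil M π x F U N t ω s a|) ^ 2
        ≤ (C₁ * (∑ s, |Ztil M π x F U N t ω s|) + C₂) ^ 2 := pow_le_pow_left₀ hXnn h2 2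
    have h5 : (C₁ * (∑ s, |Ztil M π x F U N t ω s|) + C₂) ^ 2
        ≤ 2 * C₁ ^ 2 * (∑ s, |Ztil M π x F U N t ω s|) ^ 2 + 2 * C₂ ^ 2 := by
      nlinarith [sq_nonneg (C₁ * (∑ s, |Ztil M π x F U N t ω s|) - C₂)]
    have h6 : 2 * C₁ ^ 2 * (∑ s, |Ztil M π x F U N t ω s|) ^ 2
        ≤ 2 * C₁ ^ 2 * (cS * ∑ s, (Ztil M π x F U N t ω s) ^ 2) :=
      mul_le_mul_of_nonneg_left h3 (by positivity)
    calc (∑ s, ∑ a, |Xtil M π x F U N t ω s a|) ^ 2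
        ≤ 2 * C₁ ^ 2 * (∑ s, |Ztil M π x F U N t ω s|) ^ 2 + 2 * C₂ ^ 2 := le_trans h4 h5
      _ ≤ 2 * C₁ ^ 2 * (cS * ∑ s, (Ztil M π x F U N t ω s) ^ 2) + 2 * C₂ ^ 2 := by linarith
      _ = 2 * C₁ ^ 2 * cS * (∑ s, (Ztil M π x F U N t ω s) ^ 2) + 2 * C₂ ^ 2 := by ring
  -- the pointwise bound for the sum of squared X statistics
  have hXpt : ∀ (N t : ℕ), 1 ≤ N → ∀ ω,
      (∑ s, ∑ a, (Xtil M π x F U N t ω s a) ^ 2)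
        ≤ 2 * C₁ ^ 2 * cS * (∑ s, (Ztil M π x F U N t ω s) ^ 2) + 2 * C₂ ^ 2 := by
    intro N t hN ω
    refine le_trans ?_ (habs2 N t hN ω)
    have hT : ∀ s a, |Xtil M π x F U N t ω s a|
        ≤ ∑ s, ∑ a, |Xtil M π x F U N t ω s a| := by
      intro s a
      refine le_trans (Finset.single_le_sum (f := fun a => |Xtil M π x F U N t ω s a|)
        (fun a _ => abs_nonneg _) (mem_univ a)) ?_
      exact Finset.single_le_sum (f := fun s => ∑ a, |Xtil M π x F U N t ω s a|)
        (fun s _ => Finset.sum_nonneg fun a _ => abs_nonneg _) (mem_univ s)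
    calc ∑ s, ∑ a, (Xtil M π x F U N t ω s a) ^ 2
        ≤ ∑ s, ∑ a, |Xtil M π x F U N t ω s a|
            * (∑ s, ∑ a, |Xtil M π x F U N t ω s a|) := by
          refine Finset.sum_le_sum fun s _ => Finset.sum_le_sum fun a _ => ?_
          rw [sq, ← abs_mul_abs_self]
          exact mul_le_mul_of_nonneg_left (hT s a) (abs_nonneg _)
      _ = (∑ s, ∑ a, |Xtil M π x F U N t ω s a|)
            * (∑ s, ∑ a, |Xtil M π x F U N t ω s a|) := by
          rw [Finset.sum_mul]
          exact Finset.sum_congr rfl fun s _ => by rw [Finset.sum_mul]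
      _ = (∑ s, ∑ a, |Xtil M π x F U N t ω s a|) ^ 2 := (sq _).symm
  -- inductive bound for the Z statistics
  have key : ∀ t : ℕ, ∃ Cz : ℝ, 0 ≤ Cz ∧ ∀ N, 1 ≤ N → t < M.T →
      (∫ ω, (∑ s, (Ztil M π x F U N t ω s) ^ 2) ∂μ) ≤ Cz := by
    intro t
    induction t with
    | zero =>
      refine ⟨0, le_refl 0, fun N hN _ => ?_⟩
      have hzz : (fun ω => ∑ s, (Ztil M π x F U N 0 ω s) ^ 2) = fun _ => (0 : ℝ) := by
        funext ω
        refine Finset.sum_eq_zero fun s _ => ?_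
        rw [aux_Ztil_zero M π x F U hfe]
        norm_num
      rw [hzz, MeasureTheory.integral_zero]
    | succ t ih =>
      obtain ⟨Cz, hCz0, hCzb⟩ := ih
      refine ⟨cS * (2 + 4 * C₁ ^ 2 * cS * Cz + 4 * C₂ ^ 2), by positivity, fun N hN ht1 => ?_⟩
      have ht : t < M.T := Nat.lt_of_succ_lt ht1
      have hNpos : (0 : ℝ) < N := by exact_mod_cast Nat.lt_of_lt_of_le Nat.zero_lt_one hN
      have hsqrtN : Real.sqrt N ^ 2 = N := Real.sq_sqrt (le_of_lt hNpos)
      have hZt1int : ∀ s', MeasureTheory.Integrable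
          (fun ω => (Ztil M π x F U N (t + 1) ω s') ^ 2) μ := fun s' =>
        aux_integrable_pair μ M π F U hUm hFm N (t + 1) (t + 1)
          (φ := fun σ _ => (((countOf σ s' : ℝ) - N * zOf x (t + 1) s') / Real.sqrt N) ^ 2)
          _ (fun ω => rfl)
      have hZtint : MeasureTheory.Integrable
          (fun ω => ∑ s, (Ztil M π x F U N t ω s) ^ 2) μ :=
        aux_integrable_pair μ M π F U hUm hFm N t t
          (φ := fun σ _ => ∑ s, (((countOf σ s : ℝ) - N * zOf x t s) / Real.sqrt N) ^ 2)
          _ (fun ω => rfl)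
      have hper : ∀ s', (∫ ω, (Ztil M π x F U N (t + 1) ω s') ^ 2 ∂μ)
          ≤ 2 + 4 * C₁ ^ 2 * cS * Cz + 4 * C₂ ^ 2 := by
        intro s'
        set A : Ω → ℝ := fun ω => (∑ i : Fin N, Dfun M π F U N t s' i ω) / Real.sqrt N with hA
        set B : Ω → ℝ := fun ω => ∑ s, ∑ a, M.p t s a s' * Xtil M π x F U N t ω s a with hB
        have hAint : MeasureTheory.Integrable (fun ω => (A ω) ^ 2) μ :=
          aux_integrable_pair μ M π F U hUm hFm N t (t + 1)
            (φ := fun σ τ => ((∑ i : Fin N, ((if τ i = s' then (1 : ℝ) else 0)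
              - M.p t (σ i) (actOf π t σ i) s')) / Real.sqrt N) ^ 2) _ (fun ω => rfl)
        have hBint : MeasureTheory.Integrable (fun ω => (B ω) ^ 2) μ :=
          aux_integrable_pair μ M π F U hUm hFm N t t
            (φ := fun σ _ => (∑ s, ∑ a, M.p t s a s'
              * (((π t (countOf σ) s a : ℝ) - N * x t s a) / Real.sqrt N)) ^ 2) _ (fun ω => rfl)
        have hptw : ∀ ω, (Ztil M π x F U N (t + 1) ω s') ^ 2
            ≤ 2 * (A ω) ^ 2 + 2 * (B ω) ^ 2 := by
          intro ω
          rw [aux_Ztil_succ M π x F U hfe hval hN ht1 ω s']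
          nlinarith [sq_nonneg (A ω - B ω)]
        have hAbound : (∫ ω, (A ω) ^ 2 ∂μ) ≤ 1 := by
          have hvar := aux_var_le μ M π F U hFU N t s'
          have hAeq : ∀ ω, (A ω) ^ 2
              = (∑ i : Fin N, Dfun M π F U N t s' i ω) ^ 2 / N := by
            intro ω
            rw [hA]
            rw [div_pow, hsqrtN]
          have heq : ∫ ω, (A ω) ^ 2 ∂μ
              = (∫ ω, (∑ i : Fin N, Dfun M π F U N t s' i ω) ^ 2 ∂μ) / N := by
            rw [show (fun ω => (A ω) ^ 2)
              = fun ω => (∑ i : Fin N, Dfun M π F U N t s' i ω) ^ 2 / (N : ℝ) from funext hAeq,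
              MeasureTheory.integral_div]
          rw [heq, div_le_one hNpos]
          exact hvar
        have hBptw : ∀ ω, (B ω) ^ 2
            ≤ 2 * C₁ ^ 2 * cS * (∑ s, (Ztil M π x F U N t ω s) ^ 2) + 2 * C₂ ^ 2 := by
          intro ω
          have habsB : |B ω| ≤ ∑ s, ∑ a, |Xtil M π x F U N t ω s a| := by
            rw [hB]
            refine le_trans (Finset.abs_sum_le_sum_abs _ _) ?_
            refine Finset.sum_le_sum fun s _ => ?_
            refine le_trans (Finset.abs_sum_le_sum_abs _ _) ?_
            refine Finset.sum_le_sum fun a _ => ?_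
            rw [abs_mul]
            have hp0 := M.p_nonneg t s a s'
            have hp1 := aux_p_le_one M t s a s'
            calc |M.p t s a s'| * |Xtil M π x F U N t ω s a|
                ≤ 1 * |Xtil M π x F U N t ω s a| := by
                  refine mul_le_mul_of_nonneg_right ?_ (abs_nonneg _)
                  rw [abs_of_nonneg hp0]
                  exact hp1
              _ = |Xtil M π x F U N t ω s a| := one_mul _
          have h4 : (B ω) ^ 2 ≤ (∑ s, ∑ a, |Xtil M π x F U N t ω s a|) ^ 2 := by
            rw [← sq_abs]
            exact pow_le_pow_left₀ (abs_nonneg _) habsB 2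
          exact le_trans h4 (habs2 N t hN ω)
        have hBbound : (∫ ω, (B ω) ^ 2 ∂μ) ≤ 2 * C₁ ^ 2 * cS * Cz + 2 * C₂ ^ 2 := by
          calc ∫ ω, (B ω) ^ 2 ∂μ
              ≤ ∫ ω, (2 * C₁ ^ 2 * cS * (∑ s, (Ztil M π x F U N t ω s) ^ 2)
                  + 2 * C₂ ^ 2) ∂μ :=
                MeasureTheory.integral_mono hBint
                  ((hZtint.const_mul _).add (MeasureTheory.integrable_const _)) hBptw
            _ = 2 * C₁ ^ 2 * cS * (∫ ω, (∑ s, (Ztil M π x F U N t ω s) ^ 2) ∂μ)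
                  + 2 * C₂ ^ 2 := by
                rw [MeasureTheory.integral_add (hZtint.const_mul _)
                  (MeasureTheory.integrable_const _), MeasureTheory.integral_const_mul,
                  MeasureTheory.integral_const, measureReal_def, measure_univ, ENNReal.toReal_one, smul_eq_mul,
                  one_mul]
            _ ≤ 2 * C₁ ^ 2 * cS * Cz + 2 * C₂ ^ 2 := by
                have hmono := hCzb N hN ht
                have hnn : (0 : ℝ) ≤ 2 * C₁ ^ 2 * cS := by positivity
                nlinarith
        calc ∫ ω, (Ztil M π x F U N (t + 1) ω s') ^ 2 ∂μ
            ≤ ∫ ω, (2 * (A ω) ^ 2 + 2 * (B ω) ^ 2) ∂μ :=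
              MeasureTheory.integral_mono (hZt1int s')
                ((hAint.const_mul 2).add (hBint.const_mul 2)) hptw
          _ = 2 * (∫ ω, (A ω) ^ 2 ∂μ) + 2 * (∫ ω, (B ω) ^ 2 ∂μ) := by
              rw [MeasureTheory.integral_add (hAint.const_mul 2) (hBint.const_mul 2),
                MeasureTheory.integral_const_mul, MeasureTheory.integral_const_mul]
          _ ≤ 2 * 1 + 2 * (2 * C₁ ^ 2 * cS * Cz + 2 * C₂ ^ 2) := by
              have h1 := hAbound
              have h2 := hBbound
              linarith
          _ = 2 + 4 * C₁ ^ 2 * cS * Cz + 4 * C₂ ^ 2 := by ring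
      calc ∫ ω, (∑ s', (Ztil M π x F U N (t + 1) ω s') ^ 2) ∂μ
          = ∑ s', ∫ ω, (Ztil M π x F U N (t + 1) ω s') ^ 2 ∂μ :=
            MeasureTheory.integral_finset_sum _ fun s' _ => hZt1int s'
        _ ≤ ∑ _s' : S, (2 + 4 * C₁ ^ 2 * cS * Cz + 4 * C₂ ^ 2) :=
            Finset.sum_le_sum fun s' _ => hper s'
        _ = cS * (2 + 4 * C₁ ^ 2 * cS * Cz + 4 * C₂ ^ 2) := by
            rw [Finset.sum_const, nsmul_eq_mul, Finset.card_univ]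
  choose Czf hCzf0 hCzf using key
  set C0 : ℝ := ∑ t ∈ Finset.range M.T, Czf t with hC0def
  have hC0 : ∀ t, t < M.T → Czf t ≤ C0 :=
    fun t ht => Finset.single_le_sum (fun t' _ => hCzf0 t') (Finset.mem_range.mpr ht)
  have hC0nn : 0 ≤ C0 := Finset.sum_nonneg fun t _ => hCzf0 t
  refine ⟨max C0 (2 * C₁ ^ 2 * cS * C0 + 2 * C₂ ^ 2), fun t ht N hN => ⟨?_, ?_⟩⟩
  · exact le_trans (hCzf t N hN ht) (le_trans (hC0 t ht) (le_max_left _ _))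
  · have hZtint : MeasureTheory.Integrable
        (fun ω => ∑ s, (Ztil M π x F U N t ω s) ^ 2) μ :=
      aux_integrable_pair μ M π F U hUm hFm N t t
        (φ := fun σ _ => ∑ s, (((countOf σ s : ℝ) - N * zOf x t s) / Real.sqrt N) ^ 2)
        _ (fun ω => rfl)
    have hXint : MeasureTheory.Integrable
        (fun ω => ∑ s, ∑ a, (Xtil M π x F U N t ω s a) ^ 2) μ :=
      aux_integrable_pair μ M π F U hUm hFm N t t
        (φ := fun σ _ => ∑ s, ∑ a, (((π t (countOf σ) s a : ℝ) - N * x t s a) / Real.sqrt N) ^ 2)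
        _ (fun ω => rfl)
    calc ∫ ω, (∑ s, ∑ a, (Xtil M π x F U N t ω s a) ^ 2) ∂μ
        ≤ ∫ ω, (2 * C₁ ^ 2 * cS * (∑ s, (Ztil M π x F U N t ω s) ^ 2) + 2 * C₂ ^ 2) ∂μ :=
          MeasureTheory.integral_mono hXint
            ((hZtint.const_mul _).add (MeasureTheory.integrable_const _)) (hXpt N t hN)
      _ = 2 * C₁ ^ 2 * cS * (∫ ω, (∑ s, (Ztil M π x F U N t ω s) ^ 2) ∂μ) + 2 * C₂ ^ 2 := by
          rw [MeasureTheory.integral_add (hZtint.const_mul _)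
            (MeasureTheory.integrable_const _), MeasureTheory.integral_const_mul,
            MeasureTheory.integral_const, measureReal_def, measure_univ, ENNReal.toReal_one, smul_eq_mul, one_mul]
      _ ≤ 2 * C₁ ^ 2 * cS * C0 + 2 * C₂ ^ 2 := by
          have h1 := hCzf t N hN ht
          have h2 := hC0 t ht
          have h3 : (0 : ℝ) ≤ 2 * C₁ ^ 2 * cS := by positivity
          nlinarith
      _ ≤ max C0 (2 * C₁ ^ 2 * cS * C0 + 2 * C₂ ^ 2) := le_max_right _ _
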